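/- Extremal-depth central regions of Gaussian-type processes (Corollary 1): (a) For every α ∈ (0,1), there exists γ ∈ (0,1) such that P*(C_{1−α} Δ Q_{1−γ}) = 0, where C_{1−α} is the (1−α) extremal-depth central region of P, Q_{1−γ} := {f ∈ C(I,ℝ) : q_{γ/2}(t) ≤ f(t) ≤ q_{1−γ/2}(t) for all t ∈ I}, and Δ denotes symmetric difference. (b) If h(t,s) = s for all (t,s) (so that P = P_Y is the centered process itself), then for every α ∈ (0,1) there exists w > 0 such that P_Y*(C_{1−α} Δ {f ∈ C(I,ℝ) : |f(t)| ≤ w σ(t) for all t ∈ I}) = 0; that is, every extremal-depth central region of the centered Gaussian-marginal process is, up to a P_Y-null set, a band of width proportional to the pointwise standard deviation σ. -/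

import Mathlib

open MeasureTheory Set Filter
open scoped NNReal ENNReal symmDiff

noncomputable section

/-- The space `C(I, ℝ)` of continuous real-valued functions on `I = [0,1]`,
equipped with the sup metric. -/
abbrev FSp := C(unitInterval, ℝ)

/-- Borel σ-algebra on `C(I, ℝ)`. -/
instance : MeasurableSpace FSp := borel FSp
instance : BorelSpace FSp := ⟨rfl⟩

/-- Pointwise depth `D_g(t) = 1 - |P{x : x(t) > g(t)} - P{x : x(t) < g(t)}|`. -/
def pdepth (P : Measure FSp) (g : unitInterval → ℝ) (t : unitInterval) : ℝ :=
  1 - |(P {x : FSp | g t < x t}).toReal - (P {x : FSp | x t < g t}).toReal|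

/-- Depth CDF (d-CDF) `Φ_g(r) = Leb{t ∈ I : D_g(t) ≤ r}`. -/
def dcdf (P : Measure FSp) (g : unitInterval → ℝ) (r : ℝ) : ℝ :=
  (volume {t : unitInterval | pdepth P g t ≤ r}).toReal

/-- The set `R(g,h) = {r ∈ [0,1] : Φ_g(r) ≠ Φ_h(r)}`. -/
def Rset (P : Measure FSp) (g h : unitInterval → ℝ) : Set ℝ :=
  {r ∈ Icc (0:ℝ) 1 | dcdf P g r ≠ dcdf P h r}

/-- `g ≺ h`: `g` is more extreme than `h`, i.e. `R(g,h)` is nonempty and, with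
`r* = inf R(g,h)`, there is `δ > 0` with `Φ_g(r) > Φ_h(r)` for all
`r ∈ (r*, r*+δ) ∩ [0,1]`.  `g ⪰ h` is `¬ prec P g h`. -/
def prec (P : Measure FSp) (g h : unitInterval → ℝ) : Prop :=
  (Rset P g h).Nonempty ∧
  ∃ δ > 0, ∀ r ∈ Ioo (sInf (Rset P g h)) (sInf (Rset P g h) + δ) ∩ Icc (0:ℝ) 1,
    dcdf P h r < dcdf P g r

/-- Extremal depth `ED(g,P) = P*{x ∈ C(I,ℝ) : g ⪰ x}` (a measure applied to an
arbitrary set is the induced outer measure). -/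
def ed (P : Measure FSp) (g : unitInterval → ℝ) : ℝ :=
  (P {x : FSp | ¬ prec P g ⇑x}).toReal

/-- Minimal depth level `d_f = inf{r ∈ [0,1] : Φ_f(r) > 0}`. -/
def dmin (P : Measure FSp) (f : unitInterval → ℝ) : ℝ :=
  sInf {r ∈ Icc (0:ℝ) 1 | 0 < dcdf P f r}

/-- Marginal CDF `F_t(y) = P{x : x(t) ≤ y}`. -/
def margF (P : Measure FSp) (t : unitInterval) (y : ℝ) : ℝ :=
  (P {x : FSp | x t ≤ y}).toReal

/-- Pointwise quantile function `q_a(t) = inf{y : F_t(y) ≥ a}`. -/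
def quant (P : Measure FSp) (a : ℝ) (t : unitInterval) : ℝ :=
  sInf {y : ℝ | a ≤ margF P t y}

/-- Lower envelope `f_L(t) = inf{f(t) : f ∈ C(I,ℝ), ED(f,P) > α}`. -/
def envL (P : Measure FSp) (α : ℝ) (t : unitInterval) : ℝ :=
  sInf ((fun f : FSp => f t) '' {f : FSp | α < ed P ⇑f})

/-- Upper envelope `f_U(t) = sup{f(t) : f ∈ C(I,ℝ), ED(f,P) > α}`. -/
def envU (P : Measure FSp) (α : ℝ) (t : unitInterval) : ℝ :=
  sSup ((fun f : FSp => f t) '' {f : FSp | α < ed P ⇑f})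

/-- The `(1-α)` extremal-depth central region `C_{1-α}`. -/
def centralRegion (P : Measure FSp) (α : ℝ) : Set FSp :=
  {x : FSp | ∀ t, envL P α t ≤ x t ∧ x t ≤ envU P α t}

/-- Boundary `∂C_{1-α}` of the central region. -/
def centralBoundary (P : Measure FSp) (α : ℝ) : Set FSp :=
  {x ∈ centralRegion P α | ∃ t, x t = envL P α t ∨ x t = envU P α t}

open ProbabilityTheory
open scoped Topology


def stdG (z : ℝ) : ℝ := ((gaussianReal 0 1) (Iic z)).toReal

lemma stdG_nonneg (z : ℝ) : 0 ≤ stdG z := ENNReal.toReal_nonneg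

lemma gauss_ne_top (s : Set ℝ) : gaussianReal 0 1 s ≠ ⊤ := measure_ne_top _ _

lemma gauss_singleton (a : ℝ) : gaussianReal 0 1 {a} = 0 :=
  gaussianReal_absolutelyContinuous 0 one_ne_zero (Real.volume_singleton)

lemma gauss_pos_of_vol_pos {s : Set ℝ} (hs : volume s ≠ 0) : gaussianReal 0 1 s ≠ 0 := by
  intro h
  exact hs (gaussianReal_absolutelyContinuous' 0 one_ne_zero h)

lemma stdG_strictMono : StrictMono stdG := by
  intro a b hab
  have h1 : gaussianReal 0 1 (Iic a) + gaussianReal 0 1 (Ioc a b) = gaussianReal 0 1 (Iic b) := by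
    rw [← measure_union (Iic_disjoint_Ioc le_rfl) measurableSet_Ioc, Iic_union_Ioc_eq_Iic hab.le]
  have h2 : gaussianReal 0 1 (Ioc a b) ≠ 0 := by
    apply gauss_pos_of_vol_pos
    simp [Real.volume_Ioc, hab, sub_pos.2 hab]
  have h3 := ENNReal.toReal_add (gauss_ne_top (Iic a)) (gauss_ne_top (Ioc a b))
  rw [h1] at h3
  unfold stdG
  have h4 : 0 < (gaussianReal 0 1 (Ioc a b)).toReal :=
    ENNReal.toReal_pos h2 (gauss_ne_top _)
  rw [h3]
  linarith

lemma gauss_map_neg : (gaussianReal 0 1).map (fun x => -x) = gaussianReal 0 1 := by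
  have := gaussianReal_map_const_mul (μ := 0) (v := 1) (-1)
  simp only [neg_one_mul, mul_zero, neg_zero] at this
  convert this using 2
  ext
  norm_num

lemma gauss_Iio (z : ℝ) : gaussianReal 0 1 (Iio z) = gaussianReal 0 1 (Iic z) := by
  rw [← Iio_union_right, measure_union (by simp) (measurableSet_singleton z), gauss_singleton,
    add_zero]

lemma gauss_Iic_neg (z : ℝ) : gaussianReal 0 1 (Iic (-z)) = gaussianReal 0 1 (Ici z) := by
  conv_lhs => rw [← gauss_map_neg]
  rw [Measure.map_apply measurable_neg measurableSet_Iic]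
  congr 1
  ext x
  simp [neg_le_neg_iff, le_neg]

lemma stdG_neg (z : ℝ) : stdG (-z) = 1 - stdG z := by
  unfold stdG
  rw [gauss_Iic_neg]
  have h : gaussianReal 0 1 (Iio z) + gaussianReal 0 1 (Ici z) = 1 := by
    rw [← measure_union (Iio_disjoint_Ici le_rfl) measurableSet_Ici, Iio_union_Ici]
    exact measure_univ
  have h2 := ENNReal.toReal_add (gauss_ne_top (Iio z)) (gauss_ne_top (Ici z))
  rw [h] at h2
  simp only [ENNReal.toReal_one] at h2
  rw [gauss_Iio] at h2
  linarith

lemma stdG_zero : stdG 0 = 1/2 := by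
  have := stdG_neg 0
  rw [neg_zero] at this
  linarith

lemma stdG_lt_one (z : ℝ) : stdG z < 1 := by
  have := stdG_neg (-(z+1))
  have h2 := stdG_strictMono (show z < z + 1 by linarith)
  rw [neg_neg] at this
  have h3 : 0 ≤ stdG (-(z+1)) := stdG_nonneg _
  linarith


def fInv (ψ : unitInterval × ℝ → ℝ) (p : unitInterval × ℝ) : ℝ := sSup {c | ψ (p.1, c) ≤ p.2}

lemma fInv_comp {ψ : unitInterval × ℝ → ℝ} (hm : ∀ t, StrictMono fun c => ψ (t, c))
    (t : unitInterval) (c : ℝ) : fInv ψ (t, ψ (t, c)) = c := by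
  unfold fInv
  have h : {c' : ℝ | ψ (t, c') ≤ ψ (t, c)} = Iic c := by
    ext c'; exact (hm t).le_iff_le
  rw [h, csSup_Iic]

lemma fInv_comp' {ψ : unitInterval × ℝ → ℝ} (hm : ∀ t, StrictMono fun c => ψ (t, c))
    (hs : ∀ t, Function.Surjective fun c => ψ (t, c)) (t : unitInterval) (y : ℝ) :
    ψ (t, fInv ψ (t, y)) = y := by
  obtain ⟨c, hc⟩ := hs t y
  simp only at hc
  rw [← hc, fInv_comp hm]

lemma fInv_strictMono {ψ : unitInterval × ℝ → ℝ} (hm : ∀ t, StrictMono fun c => ψ (t, c))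
    (hs : ∀ t, Function.Surjective fun c => ψ (t, c)) (t : unitInterval) :
    StrictMono fun y => fInv ψ (t, y) := by
  intro y y' hy
  have h1 := fInv_comp' hm hs t y
  have h2 := fInv_comp' hm hs t y'
  rw [← h1, ← h2] at hy
  exact (hm t).lt_iff_lt.mp hy

lemma fInv_continuous {ψ : unitInterval × ℝ → ℝ} (hc : Continuous ψ)
    (hm : ∀ t, StrictMono fun c => ψ (t, c))
    (hs : ∀ t, Function.Surjective fun c => ψ (t, c)) :
    Continuous (fInv ψ) := by
  rw [continuous_iff_continuousAt]
  intro p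
  rw [ContinuousAt]
  rw [Metric.tendsto_nhds]
  intro ε hε
  set n₀ := fInv ψ p with hn₀
  have hU : IsOpen {q : unitInterval × ℝ | ψ (q.1, n₀ - ε) < q.2 ∧ q.2 < ψ (q.1, n₀ + ε)} := by
    apply IsOpen.inter
    · exact isOpen_lt (hc.comp (continuous_fst.prodMk continuous_const)) continuous_snd
    · exact isOpen_lt continuous_snd (hc.comp (continuous_fst.prodMk continuous_const))
  have hp : p ∈ {q : unitInterval × ℝ | ψ (q.1, n₀ - ε) < q.2 ∧ q.2 < ψ (q.1, n₀ + ε)} := by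
    constructor
    · have := (hm p.1) (show n₀ - ε < n₀ by linarith)
      simp only at this; rwa [show ψ (p.1, n₀) = p.2 from fInv_comp' hm hs p.1 p.2] at this
    · have := (hm p.1) (show n₀ < n₀ + ε by linarith)
      simp only at this; rwa [show ψ (p.1, n₀) = p.2 from fInv_comp' hm hs p.1 p.2] at this
  filter_upwards [hU.mem_nhds hp] with q hq
  obtain ⟨h1, h2⟩ := hq
  have e1 : ψ (q.1, fInv ψ q) = q.2 := fInv_comp' hm hs q.1 q.2
  rw [← e1] at h1 h2
  have l1 : n₀ - ε < fInv ψ q := (hm q.1).lt_iff_lt.mp h1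
  have l2 : fInv ψ q < n₀ + ε := (hm q.1).lt_iff_lt.mp h2
  rw [Real.dist_eq, abs_sub_lt_iff]
  constructor <;> linarith

lemma unitInterval_vol_pos {U : Set unitInterval} (hU : IsOpen U) (hne : U.Nonempty) :
    0 < volume U := by
  obtain ⟨t₀, ht₀⟩ := hne
  obtain ⟨V, hV, hUV⟩ := isOpen_induced_iff.mp hU
  have ht₀V : (t₀ : ℝ) ∈ V := by rw [← hUV] at ht₀; exact ht₀
  obtain ⟨ε, hε, hball⟩ := Metric.isOpen_iff.mp hV _ ht₀V
  rw [Real.ball_eq_Ioo] at hball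
  set a := max ((t₀ : ℝ) - ε) 0 with ha
  set b := min ((t₀ : ℝ) + ε) 1 with hb
  have hab : a < b := by
    have h0 : (0:ℝ) ≤ t₀ := t₀.2.1
    have h1 : (t₀ : ℝ) ≤ 1 := t₀.2.2
    simp only [ha, hb, max_lt_iff, lt_min_iff]
    constructor
    · constructor <;> linarith
    · constructor <;> linarith
  have hsub : (Subtype.val ⁻¹' Ioo a b : Set unitInterval) ⊆ U := by
    intro t ht
    rw [← hUV]
    apply hball
    have : (t : ℝ) ∈ Ioo a b := ht
    constructor
    · have := this.1; simp only [ha, max_lt_iff] at this; linarith [this.1]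
    · have := this.2; simp only [hb, lt_min_iff] at this; linarith [this.1]
  calc (0:ℝ≥0∞) < volume (Subtype.val ⁻¹' Ioo a b : Set unitInterval) := by
        rw [unitInterval.volume_def,
          (MeasurableEmbedding.subtype_coe measurableSet_Icc).comap_apply,
          Subtype.image_preimage_coe]
        have hss : Icc (0:ℝ) 1 ∩ Ioo a b = Ioo a b := by
          apply inter_eq_self_of_subset_right
          intro x hx
          constructor
          · have := hx.1; simp only [ha, max_lt_iff] at this; linarith [this.2]
          · have := hx.2; simp only [hb, lt_min_iff] at this; linarith [this.2]
        rw [hss, Real.volume_Ioo]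
        simp [hab, sub_pos.2 hab]
      _ ≤ volume U := measure_mono hsub


def mval (ψ : unitInterval × ℝ → ℝ) (g : FSp) : ℝ := ⨆ t, |fInv ψ (t, g t)|

lemma continuous_eval_pt (t : unitInterval) : Continuous fun x : FSp => x t :=
  ContinuousEvalConst.continuous_eval_const t

lemma measurable_eval_le (t : unitInterval) (y : ℝ) : MeasurableSet {x : FSp | x t ≤ y} :=
  measurableSet_le (continuous_eval_pt t).measurable measurable_const

lemma measurable_eval_eq (t : unitInterval) (y : ℝ) : MeasurableSet {x : FSp | x t = y} :=
  measurableSet_eq_fun (continuous_eval_pt t).measurable measurable_const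

section MasterSec

variable {P : Measure FSp} {ψ : unitInterval × ℝ → ℝ}

/-- marginal CDF in terms of stdG -/
lemma margF_eq [IsProbabilityMeasure P]
    (hψm : ∀ t, StrictMono fun c => ψ (t, c))
    (hψs : ∀ t, Function.Surjective fun c => ψ (t, c))
    (hmarg : ∀ (t : unitInterval) (c : ℝ), P {x : FSp | x t ≤ ψ (t, c)} = gaussianReal 0 1 (Iic c))
    (t : unitInterval) (y : ℝ) :
    (P {x : FSp | x t ≤ y}).toReal = stdG (fInv ψ (t, y)) := by
  have h1 := hmarg t (fInv ψ (t, y))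
  rw [fInv_comp' hψm hψs] at h1
  rw [h1]; rfl

lemma margP_lt [IsProbabilityMeasure P]
    (hψm : ∀ t, StrictMono fun c => ψ (t, c))
    (hψs : ∀ t, Function.Surjective fun c => ψ (t, c))
    (hmarg : ∀ (t : unitInterval) (c : ℝ), P {x : FSp | x t ≤ ψ (t, c)} = gaussianReal 0 1 (Iic c))
    (hat : ∀ (t : unitInterval) (y : ℝ), P {x : FSp | x t = y} = 0)
    (t : unitInterval) (y : ℝ) :
    (P {x : FSp | x t < y}).toReal = stdG (fInv ψ (t, y)) := by
  have hsplit : {x : FSp | x t ≤ y} = {x : FSp | x t < y} ∪ {x : FSp | x t = y} := by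
    ext x; simp [le_iff_lt_or_eq]
  have h2 : P {x : FSp | x t ≤ y} = P {x : FSp | x t < y} := by
    apply le_antisymm
    · rw [hsplit]
      refine le_trans (measure_union_le _ _) ?_
      rw [hat t y, add_zero]
    · apply measure_mono
      intro x hx
      exact le_of_lt (show x t < y from hx)
  rw [← h2, margF_eq hψm hψs hmarg]

lemma margP_gt [IsProbabilityMeasure P]
    (hψm : ∀ t, StrictMono fun c => ψ (t, c))
    (hψs : ∀ t, Function.Surjective fun c => ψ (t, c))
    (hmarg : ∀ (t : unitInterval) (c : ℝ), P {x : FSp | x t ≤ ψ (t, c)} = gaussianReal 0 1 (Iic c))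
    (t : unitInterval) (y : ℝ) :
    (P {x : FSp | y < x t}).toReal = 1 - stdG (fInv ψ (t, y)) := by
  have hc : {x : FSp | y < x t} = {x : FSp | x t ≤ y}ᶜ := by
    ext x; simp [not_le]
  rw [hc, measure_compl (measurable_eval_le t y) (measure_ne_top _ _), measure_univ]
  rw [ENNReal.toReal_sub_of_le (prob_le_one) ENNReal.one_ne_top]
  rw [ENNReal.toReal_one, margF_eq hψm hψs hmarg]

lemma pdepth_eq [IsProbabilityMeasure P]
    (hψm : ∀ t, StrictMono fun c => ψ (t, c))
    (hψs : ∀ t, Function.Surjective fun c => ψ (t, c))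
    (hmarg : ∀ (t : unitInterval) (c : ℝ), P {x : FSp | x t ≤ ψ (t, c)} = gaussianReal 0 1 (Iic c))
    (hat : ∀ (t : unitInterval) (y : ℝ), P {x : FSp | x t = y} = 0)
    (g : unitInterval → ℝ) (t : unitInterval) :
    pdepth P g t = 2 * (1 - stdG |fInv ψ (t, g t)|) := by
  unfold pdepth
  rw [margP_gt hψm hψs hmarg, margP_lt hψm hψs hmarg hat]
  set n := fInv ψ (t, g t) with hn
  rcases le_or_gt 0 n with hpos | hneg
  · rw [abs_of_nonneg hpos]
    have h12 : 1/2 ≤ stdG n := by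
      rw [← stdG_zero]; exact stdG_strictMono.monotone hpos
    rw [abs_of_nonpos (by linarith)]
    ring
  · rw [abs_of_neg hneg]
    have h12 : stdG n < 1/2 := by
      rw [← stdG_zero]; exact stdG_strictMono hneg
    rw [abs_of_nonneg (by linarith), stdG_neg]
    ring

lemma mval_exists_max (hψc : Continuous ψ) (hψm : ∀ t, StrictMono fun c => ψ (t, c))
    (hψs : ∀ t, Function.Surjective fun c => ψ (t, c)) (g : FSp) :
    ∃ t₀ : unitInterval, (∀ t, |fInv ψ (t, g t)| ≤ |fInv ψ (t₀, g t₀)|) ∧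
      mval ψ g = |fInv ψ (t₀, g t₀)| := by
  have hu : Continuous fun t => |fInv ψ (t, g t)| :=
    ((fInv_continuous hψc hψm hψs).comp (continuous_id.prodMk g.continuous)).abs
  obtain ⟨t₀, -, hmax⟩ := isCompact_univ.exists_isMaxOn univ_nonempty hu.continuousOn
  have h1 : ∀ t, |fInv ψ (t, g t)| ≤ |fInv ψ (t₀, g t₀)| := fun t => hmax (mem_univ t)
  refine ⟨t₀, h1, ?_⟩
  unfold mval
  refine le_antisymm (ciSup_le h1) ?_
  refine le_ciSup (f := fun t => |fInv ψ (t, g t)|) ⟨|fInv ψ (t₀, g t₀)|, ?_⟩ t₀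
  rintro y ⟨t, rfl⟩
  exact h1 t

lemma mval_le (hψc : Continuous ψ) (hψm : ∀ t, StrictMono fun c => ψ (t, c))
    (hψs : ∀ t, Function.Surjective fun c => ψ (t, c)) (g : FSp) (t : unitInterval) :
    |fInv ψ (t, g t)| ≤ mval ψ g := by
  obtain ⟨t₀, h1, h2⟩ := mval_exists_max hψc hψm hψs g
  rw [h2]; exact h1 t

lemma mval_nonneg (hψc : Continuous ψ) (hψm : ∀ t, StrictMono fun c => ψ (t, c))
    (hψs : ∀ t, Function.Surjective fun c => ψ (t, c)) (g : FSp) : 0 ≤ mval ψ g :=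
  le_trans (abs_nonneg _) (mval_le hψc hψm hψs g ⟨0, by norm_num, by norm_num⟩)

lemma mval_slice (hψc : Continuous ψ) (hψm : ∀ t, StrictMono fun c => ψ (t, c)) (c : ℝ) :
    mval ψ (⟨fun t => ψ (t, c), hψc.comp (continuous_id.prodMk continuous_const)⟩ : FSp) = |c| := by
  unfold mval
  simp only [ContinuousMap.coe_mk, fInv_comp hψm]
  exact ciSup_const

lemma mval_continuous (hψc : Continuous ψ) (hψm : ∀ t, StrictMono fun c => ψ (t, c))
    (hψs : ∀ t, Function.Surjective fun c => ψ (t, c)) : Continuous (mval ψ) := by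
  have hNc : Continuous (fInv ψ) := fInv_continuous hψc hψm hψs
  have hF : Continuous fun g : FSp => ((⟨fInv ψ, hNc⟩ : C(unitInterval × ℝ, ℝ)).comp
      ((ContinuousMap.id unitInterval).prodMk g)) := by
    apply (ContinuousMap.continuous_postcomp _).comp
    apply ContinuousMap.continuous_of_continuous_uncurry
    exact continuous_snd.prodMk continuous_eval
  have heq : mval ψ = fun g : FSp => ‖(⟨fInv ψ, hNc⟩ : C(unitInterval × ℝ, ℝ)).comp
      ((ContinuousMap.id unitInterval).prodMk g)‖ := by
    funext g
    rw [ContinuousMap.norm_eq_iSup_norm]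
    simp only [ContinuousMap.comp_apply, ContinuousMap.prod_eval, ContinuousMap.id_apply,
      ContinuousMap.coe_mk, Real.norm_eq_abs, mval]
  rw [heq]
  exact hF.norm

lemma dcdf_eq_zero [IsProbabilityMeasure P] (hψc : Continuous ψ)
    (hψm : ∀ t, StrictMono fun c => ψ (t, c))
    (hψs : ∀ t, Function.Surjective fun c => ψ (t, c))
    (hmarg : ∀ (t : unitInterval) (c : ℝ), P {x : FSp | x t ≤ ψ (t, c)} = gaussianReal 0 1 (Iic c))
    (hat : ∀ (t : unitInterval) (y : ℝ), P {x : FSp | x t = y} = 0)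
    (g : FSp) {r : ℝ} (hr : r < 2 * (1 - stdG (mval ψ g))) :
    dcdf P ⇑g r = 0 := by
  have hempty : {t : unitInterval | pdepth P (⇑g) t ≤ r} = ∅ := by
    rw [eq_empty_iff_forall_notMem]
    intro t ht
    have h1 : pdepth P (⇑g) t ≤ r := ht
    rw [pdepth_eq hψm hψs hmarg hat] at h1
    have h2 : stdG |fInv ψ (t, g t)| ≤ stdG (mval ψ g) :=
      stdG_strictMono.monotone (mval_le hψc hψm hψs g t)
    linarith
  unfold dcdf
  rw [hempty]
  simp

lemma dcdf_pos [IsProbabilityMeasure P] (hψc : Continuous ψ)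
    (hψm : ∀ t, StrictMono fun c => ψ (t, c))
    (hψs : ∀ t, Function.Surjective fun c => ψ (t, c))
    (hmarg : ∀ (t : unitInterval) (c : ℝ), P {x : FSp | x t ≤ ψ (t, c)} = gaussianReal 0 1 (Iic c))
    (hat : ∀ (t : unitInterval) (y : ℝ), P {x : FSp | x t = y} = 0)
    (g : FSp) {r : ℝ} (hr : 2 * (1 - stdG (mval ψ g)) < r) :
    0 < dcdf P ⇑g r := by
  obtain ⟨t₀, hmax, hM⟩ := mval_exists_max hψc hψm hψs g
  set M := mval ψ g with hMdef
  have hu : Continuous fun t => |fInv ψ (t, g t)| :=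
    ((fInv_continuous hψc hψm hψs).comp (continuous_id.prodMk g.continuous)).abs
  have hlim : Tendsto (fun n : ℕ => stdG (M - 1/(n+1))) atTop (𝓝 (stdG M)) := by
    have hsets : Monotone fun n : ℕ => Iic (M - 1/((n:ℝ)+1)) := by
      intro a b hab
      apply Iic_subset_Iic.mpr
      have h1 : (1:ℝ)/((b:ℝ)+1) ≤ 1/((a:ℝ)+1) := by
        apply one_div_le_one_div_of_le
        · positivity
        · have : (a:ℝ) ≤ b := Nat.cast_le.mpr hab
          linarith
      linarith
    have htend := tendsto_measure_iUnion_atTop (μ := gaussianReal 0 1) hsets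
    have hU : ⋃ n : ℕ, Iic (M - 1/((n:ℝ)+1)) = Iio M := by
      ext x
      simp only [mem_iUnion, mem_Iic, mem_Iio]
      constructor
      · rintro ⟨n, hn⟩
        have : (0:ℝ) < 1/((n:ℝ)+1) := by positivity
        linarith
      · intro hx
        obtain ⟨n, hn⟩ := exists_nat_one_div_lt (show 0 < M - x by linarith)
        exact ⟨n, by linarith⟩
    rw [hU, gauss_Iio] at htend
    exact (ENNReal.tendsto_toReal (gauss_ne_top (Iic M))).comp htend
  have hev : ∀ᶠ n : ℕ in atTop, 2 * (1 - stdG (M - 1/((n:ℝ)+1))) < r := by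
    have hcont : Tendsto (fun n : ℕ => 2*(1 - stdG (M - 1/((n:ℝ)+1)))) atTop
        (𝓝 (2*(1 - stdG M))) := (hlim.const_sub 1).const_mul 2
    exact hcont.eventually_lt_const hr
  obtain ⟨n, hn⟩ := hev.exists
  obtain ⟨c, hcM, hcr⟩ : ∃ c, c < M ∧ 2 * (1 - stdG c) < r := by
    refine ⟨M - 1/((n:ℝ)+1), ?_, hn⟩
    have : (0:ℝ) < 1/((n:ℝ)+1) := by positivity
    linarith
  have hopen : IsOpen {t : unitInterval | c < |fInv ψ (t, g t)|} :=
    isOpen_lt continuous_const hu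
  have hne : t₀ ∈ {t : unitInterval | c < |fInv ψ (t, g t)|} := by
    show c < |fInv ψ (t₀, g t₀)|
    rw [← hM]; exact hcM
  have hsub : {t : unitInterval | c < |fInv ψ (t, g t)|} ⊆
      {t : unitInterval | pdepth P (⇑g) t ≤ r} := by
    intro t ht
    show pdepth P (⇑g) t ≤ r
    rw [pdepth_eq hψm hψs hmarg hat]
    have h2 : stdG c ≤ stdG |fInv ψ (t, g t)| :=
      stdG_strictMono.monotone (le_of_lt ht)
    linarith [hcr]
  have h1 : 0 < volume {t : unitInterval | c < |fInv ψ (t, g t)|} :=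
    unitInterval_vol_pos hopen ⟨t₀, hne⟩
  have h2 : volume {t : unitInterval | c < |fInv ψ (t, g t)|} ≤
      volume {t : unitInterval | pdepth P (⇑g) t ≤ r} := measure_mono hsub
  unfold dcdf
  exact ENNReal.toReal_pos (lt_of_lt_of_le h1 h2).ne' (measure_ne_top _ _)

lemma dlv_pos (g : FSp) : 0 < 2 * (1 - stdG (mval ψ g)) := by
  have := stdG_lt_one (mval ψ g); linarith

lemma dlv_le_one (hψc : Continuous ψ) (hψm : ∀ t, StrictMono fun c => ψ (t, c))
    (hψs : ∀ t, Function.Surjective fun c => ψ (t, c)) (g : FSp) :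
    2 * (1 - stdG (mval ψ g)) ≤ 1 := by
  have h1 : (1:ℝ)/2 ≤ stdG (mval ψ g) := by
    rw [← stdG_zero]
    exact stdG_strictMono.monotone (mval_nonneg hψc hψm hψs g)
  linarith

lemma Ioo_subset_Rset [IsProbabilityMeasure P] (hψc : Continuous ψ)
    (hψm : ∀ t, StrictMono fun c => ψ (t, c))
    (hψs : ∀ t, Function.Surjective fun c => ψ (t, c))
    (hmarg : ∀ (t : unitInterval) (c : ℝ), P {x : FSp | x t ≤ ψ (t, c)} = gaussianReal 0 1 (Iic c))
    (hat : ∀ (t : unitInterval) (y : ℝ), P {x : FSp | x t = y} = 0)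
    {g x : FSp} (hlt : mval ψ x < mval ψ g) :
    Ioo (2 * (1 - stdG (mval ψ g))) (2 * (1 - stdG (mval ψ x))) ⊆ Rset P ⇑g ⇑x := by
  intro r hr
  have h1 : 0 < dcdf P ⇑g r := dcdf_pos hψc hψm hψs hmarg hat g hr.1
  have h2 : dcdf P ⇑x r = 0 := dcdf_eq_zero hψc hψm hψs hmarg hat x hr.2
  refine ⟨⟨le_of_lt (lt_trans (dlv_pos g) hr.1), le_trans (le_of_lt hr.2) (dlv_le_one hψc hψm hψs x)⟩, ?_⟩
  rw [h2]
  exact ne_of_gt h1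

lemma sInf_Rset_eq [IsProbabilityMeasure P] (hψc : Continuous ψ)
    (hψm : ∀ t, StrictMono fun c => ψ (t, c))
    (hψs : ∀ t, Function.Surjective fun c => ψ (t, c))
    (hmarg : ∀ (t : unitInterval) (c : ℝ), P {x : FSp | x t ≤ ψ (t, c)} = gaussianReal 0 1 (Iic c))
    (hat : ∀ (t : unitInterval) (y : ℝ), P {x : FSp | x t = y} = 0)
    {g x : FSp} (hlt : mval ψ x < mval ψ g) :
    sInf (Rset P ⇑g ⇑x) = 2 * (1 - stdG (mval ψ g)) := by
  set a := 2 * (1 - stdG (mval ψ g)) with ha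
  set b := 2 * (1 - stdG (mval ψ x)) with hb
  have hab : a < b := by
    have := stdG_strictMono hlt
    rw [ha, hb]; linarith
  have hsub := Ioo_subset_Rset hψc hψm hψs hmarg hat hlt
  have hRlb : ∀ r ∈ Rset P ⇑g ⇑x, a ≤ r := by
    intro r hr
    by_contra hra
    push_neg at hra
    apply hr.2
    rw [dcdf_eq_zero hψc hψm hψs hmarg hat g hra,
      dcdf_eq_zero hψc hψm hψs hmarg hat x (lt_trans hra hab)]
  apply le_antisymm
  · calc sInf (Rset P ⇑g ⇑x) ≤ sInf (Ioo a b) :=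
          csInf_le_csInf ⟨0, fun r hr => hr.1.1⟩ (nonempty_Ioo.mpr hab) hsub
      _ = a := csInf_Ioo hab
  · exact le_csInf ⟨(a+b)/2, hsub ⟨by linarith, by linarith⟩⟩ hRlb

lemma prec_of_mval_lt [IsProbabilityMeasure P] (hψc : Continuous ψ)
    (hψm : ∀ t, StrictMono fun c => ψ (t, c))
    (hψs : ∀ t, Function.Surjective fun c => ψ (t, c))
    (hmarg : ∀ (t : unitInterval) (c : ℝ), P {x : FSp | x t ≤ ψ (t, c)} = gaussianReal 0 1 (Iic c))
    (hat : ∀ (t : unitInterval) (y : ℝ), P {x : FSp | x t = y} = 0)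
    {g x : FSp} (hlt : mval ψ x < mval ψ g) : prec P ⇑g ⇑x := by
  set a := 2 * (1 - stdG (mval ψ g)) with ha
  set b := 2 * (1 - stdG (mval ψ x)) with hb
  have hab : a < b := by
    have := stdG_strictMono hlt
    rw [ha, hb]; linarith
  have hsub := Ioo_subset_Rset hψc hψm hψs hmarg hat hlt
  refine ⟨⟨(a+b)/2, hsub ⟨by linarith, by linarith⟩⟩, b - a, by linarith, ?_⟩
  intro r hr
  rw [sInf_Rset_eq hψc hψm hψs hmarg hat hlt] at hr
  obtain ⟨⟨hr1, hr2⟩, -⟩ := hr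
  have h2 : dcdf P ⇑x r = 0 := by
    apply dcdf_eq_zero hψc hψm hψs hmarg hat x
    rw [← hb]
    linarith [hr2]
  have h1 : 0 < dcdf P ⇑g r := dcdf_pos hψc hψm hψs hmarg hat g hr1
  rw [h2]
  exact h1

lemma not_prec_of_mval_lt [IsProbabilityMeasure P] (hψc : Continuous ψ)
    (hψm : ∀ t, StrictMono fun c => ψ (t, c))
    (hψs : ∀ t, Function.Surjective fun c => ψ (t, c))
    (hmarg : ∀ (t : unitInterval) (c : ℝ), P {x : FSp | x t ≤ ψ (t, c)} = gaussianReal 0 1 (Iic c))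
    (hat : ∀ (t : unitInterval) (y : ℝ), P {x : FSp | x t = y} = 0)
    {g x : FSp} (hlt : mval ψ g < mval ψ x) : ¬ prec P ⇑g ⇑x := by
  rintro ⟨hne, δ, hδ, hall⟩
  set a := 2 * (1 - stdG (mval ψ x)) with ha
  set b := 2 * (1 - stdG (mval ψ g)) with hb
  have hab : a < b := by
    have := stdG_strictMono hlt
    rw [ha, hb]; linarith
  have ha0 : 0 < a := dlv_pos x
  have hb1 : b ≤ 1 := dlv_le_one hψc hψm hψs g
  have hinf : sInf (Rset P ⇑g ⇑x) = a := by
    -- Rset P ⇑g ⇑x = Rset P ⇑x ⇑g as sets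
    have hsymm : Rset P ⇑g ⇑x = Rset P ⇑x ⇑g := by
      unfold Rset
      ext r
      simp only [mem_setOf_eq]
      exact and_congr_right fun _ => ne_comm
    rw [hsymm]
    exact sInf_Rset_eq hψc hψm hψs hmarg hat hlt
  set r := min (a + δ/2) ((a+b)/2) with hrdef
  have hra : a < r := by
    apply lt_min <;> linarith
  have hrb : r < b := min_lt_of_right_lt (by linarith)
  have hrδ : r < a + δ := min_lt_of_left_lt (by linarith)
  have hmem : r ∈ Ioo (sInf (Rset P ⇑g ⇑x)) (sInf (Rset P ⇑g ⇑x) + δ) ∩ Icc (0:ℝ) 1 := by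
    rw [hinf]
    exact ⟨⟨hra, hrδ⟩, le_of_lt (lt_trans ha0 hra), le_trans (le_of_lt hrb) hb1⟩
  have hcontra := hall r hmem
  have h1 : dcdf P ⇑g r = 0 := dcdf_eq_zero hψc hψm hψs hmarg hat g hrb
  have h2 : 0 < dcdf P ⇑x r := dcdf_pos hψc hψm hψs hmarg hat x hra
  rw [h1] at hcontra
  linarith

lemma ed_eq_tau [IsProbabilityMeasure P] (hψc : Continuous ψ)
    (hψm : ∀ t, StrictMono fun c => ψ (t, c))
    (hψs : ∀ t, Function.Surjective fun c => ψ (t, c))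
    (hmarg : ∀ (t : unitInterval) (c : ℝ), P {x : FSp | x t ≤ ψ (t, c)} = gaussianReal 0 1 (Iic c))
    (hat : ∀ (t : unitInterval) (y : ℝ), P {x : FSp | x t = y} = 0)
    (hatM : ∀ c : ℝ, P {x : FSp | mval ψ x = c} = 0)
    (f : FSp) :
    ed P ⇑f = (P {x : FSp | mval ψ f < mval ψ x}).toReal := by
  unfold ed
  congr 1
  apply le_antisymm
  · have hS2 : {x : FSp | ¬ prec P ⇑f ⇑x} ⊆
        {x : FSp | mval ψ f < mval ψ x} ∪ {x : FSp | mval ψ x = mval ψ f} := by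
      intro x hx
      rcases lt_trichotomy (mval ψ f) (mval ψ x) with h|h|h
      · exact Or.inl h
      · exact Or.inr h.symm
      · exact absurd (prec_of_mval_lt hψc hψm hψs hmarg hat h) hx
    refine le_trans (measure_mono hS2) ?_
    refine le_trans (measure_union_le _ _) ?_
    rw [hatM (mval ψ f), add_zero]
  · apply measure_mono
    intro x hx
    exact not_prec_of_mval_lt hψc hψm hψs hmarg hat hx

lemma exists_w [IsProbabilityMeasure P] (hψc : Continuous ψ)
    (hψm : ∀ t, StrictMono fun c => ψ (t, c))
    (hψs : ∀ t, Function.Surjective fun c => ψ (t, c))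
    (hatM : ∀ c : ℝ, P {x : FSp | mval ψ x = c} = 0)
    {α : ℝ} (hα : α ∈ Ioo (0:ℝ) 1) :
    ∃ w : ℝ, 0 < w ∧ ∀ c : ℝ, (α < (P {x : FSp | c < mval ψ x}).toReal ↔ c < w) := by
  set τ : ℝ → ℝ := fun c => (P {x : FSp | c < mval ψ x}).toReal with hτ
  have hmeasm : Measurable (mval ψ) := (mval_continuous hψc hψm hψs).measurable
  have hmeas : ∀ c : ℝ, MeasurableSet {x : FSp | c < mval ψ x} := fun c =>
    measurableSet_lt measurable_const hmeasm
  have hanti : ∀ c c' : ℝ, c ≤ c' → τ c' ≤ τ c := by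
    intro c c' hcc
    apply ENNReal.toReal_mono (measure_ne_top _ _)
    apply measure_mono
    intro x hx
    exact lt_of_le_of_lt hcc hx
  have hright : ∀ c : ℝ, Tendsto (fun n : ℕ => τ (c + 1/((n:ℝ)+1))) atTop (𝓝 (τ c)) := by
    intro c
    have hmono : Monotone fun n : ℕ => {x : FSp | c + 1/((n:ℝ)+1) < mval ψ x} := by
      intro a b hab x hx
      have h1 : (1:ℝ)/((b:ℝ)+1) ≤ 1/((a:ℝ)+1) := by
        apply one_div_le_one_div_of_le
        · positivity
        · have : (a:ℝ) ≤ b := Nat.cast_le.mpr hab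
          linarith
      have hx' : c + 1/((a:ℝ)+1) < mval ψ x := hx
      show c + 1/((b:ℝ)+1) < mval ψ x
      linarith
    have htend := tendsto_measure_iUnion_atTop (μ := P) hmono
    have hU : ⋃ n : ℕ, {x : FSp | c + 1/((n:ℝ)+1) < mval ψ x} = {x : FSp | c < mval ψ x} := by
      ext x
      simp only [mem_iUnion, mem_setOf_eq]
      constructor
      · rintro ⟨n, hn⟩
        have : (0:ℝ) < 1/((n:ℝ)+1) := by positivity
        linarith
      · intro hx
        obtain ⟨n, hn⟩ := exists_nat_one_div_lt (show 0 < mval ψ x - c by linarith)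
        exact ⟨n, by linarith⟩
    rw [hU] at htend
    exact (ENNReal.tendsto_toReal (measure_ne_top _ _)).comp htend
  have htop : Tendsto (fun n : ℕ => τ (n:ℝ)) atTop (𝓝 0) := by
    have hanti' : Antitone fun n : ℕ => {x : FSp | (n:ℝ) < mval ψ x} := by
      intro a b hab x hx
      have hx' : (b:ℝ) < mval ψ x := hx
      show (a:ℝ) < mval ψ x
      have : (a:ℝ) ≤ b := Nat.cast_le.mpr hab
      linarith
    have hint : ⋂ n : ℕ, {x : FSp | (n:ℝ) < mval ψ x} = ∅ := by
      rw [eq_empty_iff_forall_notMem]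
      intro x hx
      simp only [mem_iInter, mem_setOf_eq] at hx
      obtain ⟨n, hn⟩ := exists_nat_gt (mval ψ x)
      exact absurd (hx n) (not_lt.mpr (le_of_lt hn))
    have htend := tendsto_measure_iInter_atTop (μ := P)
      (fun n => (hmeas _).nullMeasurableSet) hanti' ⟨0, measure_ne_top _ _⟩
    rw [hint, measure_empty] at htend
    have := (ENNReal.tendsto_toReal (by norm_num : (0:ℝ≥0∞) ≠ ⊤)).comp htend
    exact this
  have htau0 : τ 0 = 1 := by
    have hcompl : {x : FSp | 0 < mval ψ x} = {x : FSp | mval ψ x = 0}ᶜ := by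
      ext x
      simp only [mem_setOf_eq, mem_compl_iff]
      constructor
      · intro h heq; rw [heq] at h; exact lt_irrefl 0 h
      · intro h
        rcases lt_or_eq_of_le (mval_nonneg hψc hψm hψs x) with h'|h'
        · exact h'
        · exact absurd h'.symm h
    rw [hτ]
    simp only
    rw [hcompl, measure_compl (measurableSet_eq_fun hmeasm measurable_const) (measure_ne_top _ _),
      hatM 0, measure_univ, tsub_zero, ENNReal.toReal_one]
  set W : Set ℝ := {c | α < τ c} with hW
  have hWel : ∃ e : ℝ, 0 < e ∧ e ∈ W := by
    have h1 : α < τ 0 := by rw [htau0]; exact hα.2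
    obtain ⟨n, hn⟩ := ((hright 0).eventually_const_lt h1).exists
    refine ⟨0 + 1/((n:ℝ)+1), by positivity, hn⟩
  obtain ⟨e, he, heW⟩ := hWel
  have hWbdd : BddAbove W := by
    obtain ⟨n₀, hn₀⟩ := (htop.eventually_lt_const hα.1).exists
    refine ⟨(n₀:ℝ), ?_⟩
    intro c hc
    by_contra hcn
    push_neg at hcn
    have : τ c ≤ τ (n₀:ℝ) := hanti _ _ (le_of_lt hcn)
    have hc' : α < τ c := hc
    linarith
  set w := sSup W with hw
  have hwpos : 0 < w := lt_of_lt_of_le he (le_csSup hWbdd heW)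
  refine ⟨w, hwpos, fun c => ⟨?_, ?_⟩⟩
  · intro hc
    obtain ⟨n, hn⟩ := ((hright c).eventually_const_lt hc).exists
    have hmem : c + 1/((n:ℝ)+1) ∈ W := hn
    have : c + 1/((n:ℝ)+1) ≤ w := le_csSup hWbdd hmem
    have hpos : (0:ℝ) < 1/((n:ℝ)+1) := by positivity
    linarith
  · intro hc
    obtain ⟨c', hc'W, hcc'⟩ := exists_lt_of_lt_csSup ⟨e, heW⟩ hc
    have h1 : α < τ c' := hc'W
    exact lt_of_lt_of_le h1 (hanti _ _ (le_of_lt hcc'))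

lemma env_eq [IsProbabilityMeasure P] (hψc : Continuous ψ)
    (hψm : ∀ t, StrictMono fun c => ψ (t, c))
    (hψs : ∀ t, Function.Surjective fun c => ψ (t, c))
    (hmarg : ∀ (t : unitInterval) (c : ℝ), P {x : FSp | x t ≤ ψ (t, c)} = gaussianReal 0 1 (Iic c))
    (hat : ∀ (t : unitInterval) (y : ℝ), P {x : FSp | x t = y} = 0)
    (hatM : ∀ c : ℝ, P {x : FSp | mval ψ x = c} = 0)
    {α w : ℝ} (hw : 0 < w)
    (hchar : ∀ c : ℝ, (α < (P {x : FSp | c < mval ψ x}).toReal ↔ c < w)) (t : unitInterval) :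
    envL P α t = ψ (t, -w) ∧ envU P α t = ψ (t, w) := by
  have hA : {f : FSp | α < ed P ⇑f} = {f : FSp | mval ψ f < w} := by
    ext f
    rw [mem_setOf_eq, mem_setOf_eq, ed_eq_tau hψc hψm hψs hmarg hat hatM f, hchar]
  set gc : ℝ → FSp := fun c =>
    ⟨fun t => ψ (t, c), hψc.comp (continuous_id.prodMk continuous_const)⟩ with hgc
  have hgmem : ∀ c : ℝ, |c| < w → gc c ∈ {f : FSp | mval ψ f < w} := by
    intro c hc
    show mval ψ (gc c) < w
    rw [hgc]
    rw [mval_slice hψc hψm c]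
    exact hc
  have hbound : ∀ f : FSp, mval ψ f < w → ∀ t, ψ (t, -w) < f t ∧ f t < ψ (t, w) := by
    intro f hf t
    have h1 : |fInv ψ (t, f t)| < w := lt_of_le_of_lt (mval_le hψc hψm hψs f t) hf
    obtain ⟨hl, hr⟩ := abs_lt.mp h1
    constructor
    · have h5 := (hψm t) hl
      simp only at h5
      rwa [fInv_comp' hψm hψs] at h5
    · have h5 := (hψm t) hr
      simp only at h5
      rwa [fInv_comp' hψm hψs] at h5
  have htcont : Continuous fun c : ℝ => ψ (t, c) :=
    hψc.comp (continuous_const.prodMk continuous_id)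
  constructor
  · unfold envL
    rw [hA]
    apply IsGLB.csInf_eq
    · constructor
      · rintro y ⟨f, hf, rfl⟩
        exact le_of_lt (hbound f hf t).1
      · intro z hz
        have hev : ∀ᶠ c in 𝓝[>] (-w), z ≤ ψ (t, c) := by
          filter_upwards [Ioo_mem_nhdsGT_of_mem (⟨le_rfl, by linarith⟩ : -w ∈ Ico (-w) 0)]
            with c hc
          have hcw : |c| < w := by
            rw [abs_lt]; constructor
            · exact hc.1
            · linarith [hc.2]
          exact hz ⟨gc c, hgmem c hcw, rfl⟩
        have htd : Tendsto (fun c : ℝ => ψ (t, c)) (𝓝[>] (-w)) (𝓝 (ψ (t, -w))) :=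
          (htcont.tendsto (-w)).mono_left nhdsWithin_le_nhds
        exact ge_of_tendsto htd hev
    · exact ⟨gc 0 t, ⟨gc 0, hgmem 0 (by rwa [abs_zero]), rfl⟩⟩
  · unfold envU
    rw [hA]
    apply IsLUB.csSup_eq
    · constructor
      · rintro y ⟨f, hf, rfl⟩
        exact le_of_lt (hbound f hf t).2
      · intro z hz
        have hev : ∀ᶠ c in 𝓝[<] w, ψ (t, c) ≤ z := by
          filter_upwards [Ioo_mem_nhdsLT_of_mem (⟨hw, le_rfl⟩ : w ∈ Ioc 0 w)] with c hc
          have hcw : |c| < w := by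
            rw [abs_lt]; constructor
            · linarith [hc.1]
            · exact hc.2
          exact hz ⟨gc c, hgmem c hcw, rfl⟩
        have htd : Tendsto (fun c : ℝ => ψ (t, c)) (𝓝[<] w) (𝓝 (ψ (t, w))) :=
          (htcont.tendsto w).mono_left nhdsWithin_le_nhds
        exact le_of_tendsto htd hev
    · exact ⟨gc 0 t, ⟨gc 0, hgmem 0 (by rwa [abs_zero]), rfl⟩⟩

lemma quant_eq [IsProbabilityMeasure P]
    (hψm : ∀ t, StrictMono fun c => ψ (t, c))
    (hψs : ∀ t, Function.Surjective fun c => ψ (t, c))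
    (hmarg : ∀ (t : unitInterval) (c : ℝ), P {x : FSp | x t ≤ ψ (t, c)} = gaussianReal 0 1 (Iic c))
    (t : unitInterval) (c : ℝ) :
    quant P (stdG c) t = ψ (t, c) := by
  unfold quant
  apply IsLeast.csInf_eq
  constructor
  · show stdG c ≤ margF P t (ψ (t, c))
    unfold margF
    rw [margF_eq hψm hψs hmarg, fInv_comp hψm]
  · intro y hy
    by_contra hlt
    push_neg at hlt
    have hy' : stdG c ≤ margF P t y := hy
    unfold margF at hy'
    rw [margF_eq hψm hψs hmarg] at hy'
    have h2 : fInv ψ (t, y) < c := by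
      have h3 := fInv_strictMono hψm hψs t hlt
      simp only at h3
      rwa [fInv_comp hψm] at h3
    have := stdG_strictMono h2
    linarith

lemma master_lemma [IsProbabilityMeasure P] (hψc : Continuous ψ)
    (hψm : ∀ t, StrictMono fun c => ψ (t, c))
    (hψs : ∀ t, Function.Surjective fun c => ψ (t, c))
    (hmarg : ∀ (t : unitInterval) (c : ℝ), P {x : FSp | x t ≤ ψ (t, c)} = gaussianReal 0 1 (Iic c))
    (hat : ∀ (t : unitInterval) (y : ℝ), P {x : FSp | x t = y} = 0)
    (hatM : ∀ c : ℝ, P {x : FSp | mval ψ x = c} = 0)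
    {α : ℝ} (hα : α ∈ Ioo (0:ℝ) 1) :
    ∃ w > (0:ℝ), ∃ γ ∈ Ioo (0:ℝ) 1,
      (∀ t, envL P α t = ψ (t, -w) ∧ envU P α t = ψ (t, w)) ∧
      (∀ t, quant P (γ/2) t = ψ (t, -w) ∧ quant P (1 - γ/2) t = ψ (t, w)) := by
  obtain ⟨w, hwpos, hchar⟩ := exists_w hψc hψm hψs hatM hα
  have hsw : 1/2 < stdG w := by
    rw [← stdG_zero]
    exact stdG_strictMono hwpos
  have hsw1 : stdG w < 1 := stdG_lt_one w
  refine ⟨w, hwpos, 2*(1 - stdG w), ⟨by linarith, by linarith⟩, ?_, ?_⟩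
  · exact fun t => env_eq hψc hψm hψs hmarg hat hatM hwpos hchar t
  · intro t
    constructor
    · have e1 : 2*(1 - stdG w)/2 = stdG (-w) := by rw [stdG_neg]; ring
      rw [e1]
      exact quant_eq hψm hψs hmarg t (-w)
    · have e2 : 1 - 2*(1 - stdG w)/2 = stdG w := by ring
      rw [e2]
      exact quant_eq hψm hψs hmarg t w

end MasterSec

def psiB (σ : C(unitInterval, ℝ)) : unitInterval × ℝ → ℝ := fun p => p.2 * σ p.1

def psiA (h : C(unitInterval × ℝ, ℝ)) (σ : C(unitInterval, ℝ)) : unitInterval × ℝ → ℝ :=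
  fun p => h (p.1, p.2 * σ p.1)

section Inst

variable {σ : C(unitInterval, ℝ)} (hσ : ∀ t, 0 < σ t)
  {P_Y : Measure FSp} [IsProbabilityMeasure P_Y]
  (hmargin : ∀ t : unitInterval,
      P_Y.map (fun x : FSp => x t) = gaussianReal 0 ⟨(σ t) ^ 2, sq_nonneg _⟩)

lemma var_ne_zero (t : unitInterval) (hσ : ∀ t, 0 < σ t) :
    (⟨(σ t) ^ 2, sq_nonneg _⟩ : ℝ≥0) ≠ 0 := by
  intro hzero
  have h2 : (σ t)^2 = 0 := congrArg NNReal.toReal hzero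
  nlinarith [hσ t]

include hσ hmargin in
lemma margB (t : unitInterval) (c : ℝ) :
    P_Y {x : FSp | x t ≤ c * σ t} = gaussianReal 0 1 (Iic c) := by
  have h1 : {x : FSp | x t ≤ c * σ t} = (fun x : FSp => x t) ⁻¹' (Iic (c * σ t)) := rfl
  rw [h1, ← Measure.map_apply (continuous_eval_pt t).measurable measurableSet_Iic, hmargin t]
  have h2 : (gaussianReal 0 1).map (fun x => σ t * x) =
      gaussianReal 0 ⟨(σ t)^2, sq_nonneg _⟩ := by
    have h3 := gaussianReal_map_const_mul (μ := 0) (v := 1) (σ t)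
    rw [mul_zero, mul_one] at h3
    exact h3
  rw [← h2, Measure.map_apply (measurable_const_mul _) measurableSet_Iic]
  congr 1
  ext x
  simp only [mem_preimage, mem_Iic]
  rw [mul_comm]
  exact mul_le_mul_iff_of_pos_right (hσ t)

include hσ hmargin in
lemma atB (t : unitInterval) (y : ℝ) : P_Y {x : FSp | x t = y} = 0 := by
  have h1 : {x : FSp | x t = y} = (fun x : FSp => x t) ⁻¹' {y} := rfl
  rw [h1, ← Measure.map_apply (continuous_eval_pt t).measurable (measurableSet_singleton y),
    hmargin t]
  exact gaussianReal_absolutelyContinuous 0 (var_ne_zero t hσ) Real.volume_singleton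

end Inst



/-- **Corollary 1 (extremal-depth central regions of Gaussian-type
processes).** (a) every ED central region coincides a.s. with a pointwise
quantile region; (b) when `h(t,s) = s`, every ED central region of the centered
process is a.s. a band of width proportional to `σ`. -/
theorem gaussian_central_regions
    (σ : C(unitInterval, ℝ)) (hσ : ∀ t, 0 < σ t)
    (P_Y : Measure FSp) [IsProbabilityMeasure P_Y]
    (hmargin : ∀ t : unitInterval,
      P_Y.map (fun x : FSp => x t) =
        ProbabilityTheory.gaussianReal 0 ⟨(σ t) ^ 2, sq_nonneg _⟩)
    (hatom : ∀ c : ℝ, P_Y {x : FSp | (⨆ t, |x t| / σ t) = c} = 0)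
    (h : C(unitInterval × ℝ, ℝ))
    (hmono : ∀ t : unitInterval, StrictMono fun s => h (t, s))
    (hsurj : ∀ t : unitInterval, Function.Surjective fun s => h (t, s))
    (T : FSp → FSp) (hT : ∀ (x : FSp) (t : unitInterval), T x t = h (t, x t))
    (hTcont : Continuous T)
    (P : Measure FSp) (hP : P = P_Y.map T) :
    (∀ α ∈ Ioo (0:ℝ) 1, ∃ γ ∈ Ioo (0:ℝ) 1,
      P (symmDiff (centralRegion P α)
        {f : FSp | ∀ t, quant P (γ/2) t ≤ f t ∧ f t ≤ quant P (1 - γ/2) t}) = 0) ∧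
    ((∀ (t : unitInterval) (s : ℝ), h (t, s) = s) →
      ∀ α ∈ Ioo (0:ℝ) 1, ∃ w > (0:ℝ),
        P_Y (symmDiff (centralRegion P_Y α)
          {f : FSp | ∀ t, |f t| ≤ w * σ t}) = 0) := by
  have hψcb : Continuous (psiB σ) :=
    continuous_snd.mul (σ.continuous.comp continuous_fst)
  have hψmb : ∀ t, StrictMono fun c => psiB σ (t, c) := by
    intro t a b hab
    exact mul_lt_mul_of_pos_right hab (hσ t)
  have hψsb : ∀ t, Function.Surjective fun c => psiB σ (t, c) := by
    intro t y
    exact ⟨y / σ t, div_mul_cancel₀ y (hσ t).ne'⟩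
  have hmargb : ∀ (t : unitInterval) (c : ℝ),
      P_Y {x : FSp | x t ≤ psiB σ (t, c)} = gaussianReal 0 1 (Iic c) := fun t c =>
    margB hσ hmargin t c
  have hatb : ∀ (t : unitInterval) (y : ℝ), P_Y {x : FSp | x t = y} = 0 := fun t y =>
    atB hσ hmargin t y
  have hmvb : ∀ x : FSp, mval (psiB σ) x = ⨆ t, |x t| / σ t := by
    intro x
    unfold mval
    congr 1
    funext t
    have h1 : fInv (psiB σ) (t, x t) = x t / σ t := by
      have h2 := fInv_comp (ψ := psiB σ) hψmb t (x t / σ t)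
      rw [show psiB σ (t, x t / σ t) = x t from div_mul_cancel₀ _ (hσ t).ne'] at h2
      exact h2
    rw [h1, abs_div, abs_of_pos (hσ t)]
  have hatMb : ∀ c : ℝ, P_Y {x : FSp | mval (psiB σ) x = c} = 0 := by
    intro c
    have hset : {x : FSp | mval (psiB σ) x = c} = {x : FSp | (⨆ t, |x t| / σ t) = c} := by
      ext x
      simp only [mem_setOf_eq, hmvb x]
    rw [hset]
    exact hatom c
  -- part (a) setup
  haveI hPM : IsProbabilityMeasure P := by
    rw [hP]
    exact Measure.isProbabilityMeasure_map hTcont.measurable.aemeasurable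
  have hψca : Continuous (psiA h σ) :=
    h.continuous.comp (continuous_fst.prodMk (continuous_snd.mul (σ.continuous.comp continuous_fst)))
  have hψma : ∀ t, StrictMono fun c => psiA h σ (t, c) := by
    intro t a b hab
    exact hmono t (mul_lt_mul_of_pos_right hab (hσ t))
  have hψsa : ∀ t, Function.Surjective fun c => psiA h σ (t, c) := by
    intro t y
    obtain ⟨s, hs⟩ := hsurj t y
    refine ⟨s / σ t, ?_⟩
    show h (t, s / σ t * σ t) = y
    rw [div_mul_cancel₀ _ (hσ t).ne']
    exact hs
  have hmarga : ∀ (t : unitInterval) (c : ℝ),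
      P {x : FSp | x t ≤ psiA h σ (t, c)} = gaussianReal 0 1 (Iic c) := by
    intro t c
    rw [hP, Measure.map_apply hTcont.measurable (measurable_eval_le t _)]
    have hpre : T ⁻¹' {x : FSp | x t ≤ psiA h σ (t, c)} = {y : FSp | y t ≤ c * σ t} := by
      ext y
      simp only [mem_preimage, mem_setOf_eq, hT]
      exact (hmono t).le_iff_le
    rw [hpre]
    exact margB hσ hmargin t c
  have hata : ∀ (t : unitInterval) (y : ℝ), P {x : FSp | x t = y} = 0 := by
    intro t y
    rw [hP, Measure.map_apply hTcont.measurable (measurable_eval_eq t y)]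
    obtain ⟨s, hs⟩ := hsurj t y
    have hpre : T ⁻¹' {x : FSp | x t = y} = {x : FSp | x t = s} := by
      ext x
      simp only [mem_preimage, mem_setOf_eq, hT]
      rw [← hs]
      exact (hmono t).injective.eq_iff
    rw [hpre]
    exact atB hσ hmargin t s
  have hmva : ∀ y : FSp, mval (psiA h σ) (T y) = ⨆ t, |y t| / σ t := by
    intro y
    unfold mval
    congr 1
    funext t
    have h1 : fInv (psiA h σ) (t, T y t) = y t / σ t := by
      have h2 := fInv_comp (ψ := psiA h σ) hψma t (y t / σ t)
      rw [show psiA h σ (t, y t / σ t) = T y t from ?_] at h2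
      · exact h2
      · show h (t, y t / σ t * σ t) = T y t
        rw [div_mul_cancel₀ _ (hσ t).ne', hT]
    rw [h1, abs_div, abs_of_pos (hσ t)]
  have hatMa : ∀ c : ℝ, P {x : FSp | mval (psiA h σ) x = c} = 0 := by
    intro c
    have hSm : MeasurableSet {x : FSp | mval (psiA h σ) x = c} :=
      measurableSet_eq_fun (mval_continuous hψca hψma hψsa).measurable measurable_const
    rw [hP, Measure.map_apply hTcont.measurable hSm]
    have hpre : T ⁻¹' {x : FSp | mval (psiA h σ) x = c} =
        {y : FSp | (⨆ t, |y t| / σ t) = c} := by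
      ext y
      simp only [mem_preimage, mem_setOf_eq, hmva y]
    rw [hpre]
    exact hatom c
  constructor
  · -- part (a)
    intro α hα
    obtain ⟨w, hwpos, γ, hγ, henv, hquant⟩ :=
      master_lemma hψca hψma hψsa hmarga hata hatMa hα
    refine ⟨γ, hγ, ?_⟩
    have hceq : centralRegion P α =
        {f : FSp | ∀ t, quant P (γ/2) t ≤ f t ∧ f t ≤ quant P (1 - γ/2) t} := by
      unfold centralRegion
      ext f
      simp only [mem_setOf_eq]
      apply forall_congr'
      intro t
      rw [(henv t).1, (henv t).2, (hquant t).1, (hquant t).2]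
    rw [hceq, symmDiff_self]
    simp
  · -- part (b)
    intro _ α hα
    obtain ⟨w, hwpos, γ, hγ, henv, hquant⟩ :=
      master_lemma hψcb hψmb hψsb hmargb hatb hatMb hα
    refine ⟨w, hwpos, ?_⟩
    have hceq : centralRegion P_Y α = {f : FSp | ∀ t, |f t| ≤ w * σ t} := by
      unfold centralRegion
      ext f
      simp only [mem_setOf_eq]
      apply forall_congr'
      intro t
      rw [(henv t).1, (henv t).2]
      show psiB σ (t, -w) ≤ f t ∧ f t ≤ psiB σ (t, w) ↔ |f t| ≤ w * σ t
      rw [abs_le]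
      unfold psiB
      simp only [neg_mul]
    rw [hceq, symmDiff_self]
    simp
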